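/- arXiv:1604.07101 — 2 statements merged into one kernel-verified Lean document; each statement's English description precedes it below -/
import Mathlib

section
/- Let (X_k)_{k≥1} be an i.i.d. sequence of random variables taking values in [0,1] with common mean p, and let S_s = X_1 + ⋯ + X_s. For any α > 1/2 and any integer t ≥ 2, the probability that there exists s ∈ {1, …, t} with S_s/s − √(α·log t / s) ≥ p is at most (log t / log(α + 1/2) + 1) · t^{−2α/(α+1/2)}. (This is the anytime lower-confidence-bound deviation inequality, Eq. (15) of Lemma 6, proved by a peeling argument together with Hoeffding's inequality.) -/
open MeasureTheory ProbabilityTheory Real Finset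


/-- Core scalar inequality for Hoeffding's lemma. -/
lemma hoeffding_aux (q : ℝ) (hq0 : 0 ≤ q) (hq1 : q ≤ 1) (h : ℝ) :
    (1-q) * Real.exp (-q*h) + q * Real.exp ((1-q)*h) ≤ Real.exp (h^2/8) := by
  rcases eq_or_lt_of_le hq0 with rfl | hq0'
  · simpa using Real.one_le_exp (by positivity)
  rcases eq_or_lt_of_le hq1 with rfl | hq1'
  · simpa using Real.one_le_exp (by positivity)
  set A : ℝ → ℝ := fun x => (1-q) * Real.exp (-q*x) with hA_def
  set B : ℝ → ℝ := fun x => q * Real.exp ((1-q)*x) with hB_def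
  have hApos : ∀ x, 0 < A x := fun x => by
    have := Real.exp_pos (-q*x); simp only [hA_def]; nlinarith
  have hBpos : ∀ x, 0 < B x := fun x => by
    have := Real.exp_pos ((1-q)*x); simp only [hB_def]; nlinarith
  have hφpos : ∀ x, 0 < A x + B x := fun x => add_pos (hApos x) (hBpos x)
  have hA' : ∀ x, HasDerivAt A (-q * A x) x := by
    intro x
    have h1 : HasDerivAt (fun x : ℝ => -q*x) (-q) x := by
      simpa using (hasDerivAt_id x).const_mul (-q)
    have h2 := (h1.exp).const_mul (1-q)
    refine h2.congr_deriv ?_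
    simp only [hA_def]; ring
  have hB' : ∀ x, HasDerivAt B ((1-q) * B x) x := by
    intro x
    have h1 : HasDerivAt (fun x : ℝ => (1-q)*x) (1-q) x := by
      simpa using (hasDerivAt_id x).const_mul (1-q)
    have h2 := (h1.exp).const_mul q
    refine h2.congr_deriv ?_
    simp only [hB_def]; ring
  have hφ' : ∀ x, HasDerivAt (fun x => A x + B x) (-q * A x + (1-q) * B x) x :=
    fun x => (hA' x).add (hB' x)
  -- D x = x^2/8 - log (A x + B x), D' x = x/4 - (-q A + (1-q) B)/(A+B)
  set D' : ℝ → ℝ := fun x => x/4 - (-q * A x + (1-q) * B x)/(A x + B x) with hD'_def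
  have hD : ∀ x, HasDerivAt (fun x => x^2/8 - Real.log (A x + B x)) (D' x) x := by
    intro x
    have h1 : HasDerivAt (fun x : ℝ => x^2/8) (x/4) x := by
      have := (hasDerivAt_pow 2 x).div_const 8
      refine this.congr_deriv ?_; norm_num; ring
    exact h1.sub ((hφ' x).log (hφpos x).ne')
  have hD' : ∀ x, HasDerivAt D'
      (1/4 - ((q^2 * A x + (1-q)^2 * B x) * (A x + B x) - (-q * A x + (1-q) * B x)^2)
        / (A x + B x)^2) x := by
    intro x
    have h1 : HasDerivAt (fun x : ℝ => x/4) (1/4) x := (hasDerivAt_id x).div_const 4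
    have h2 : HasDerivAt (fun x => -q * A x + (1-q) * B x)
        (q^2 * A x + (1-q)^2 * B x) x := by
      have := ((hA' x).const_mul (-q)).add ((hB' x).const_mul (1-q))
      refine this.congr_deriv ?_; ring
    have h3 := h1.sub (h2.div (hφ' x) (hφpos x).ne')
    refine h3.congr_deriv ?_
    ring
  have hD'nonneg : ∀ x, 0 ≤ 1/4 - ((q^2 * A x + (1-q)^2 * B x) * (A x + B x)
      - (-q * A x + (1-q) * B x)^2) / (A x + B x)^2 := by
    intro x
    have hkey : (q^2 * A x + (1-q)^2 * B x) * (A x + B x) - (-q * A x + (1-q) * B x)^2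
        = A x * B x := by ring
    rw [hkey, sub_nonneg, div_le_iff₀ (pow_pos (hφpos x) 2)]
    nlinarith [sq_nonneg (A x - B x), hApos x, hBpos x]
  have hD'mono : Monotone D' := by
    refine monotone_of_deriv_nonneg (fun x => (hD' x).differentiableAt) (fun x => ?_)
    rw [(hD' x).deriv]; exact hD'nonneg x
  have hD'0 : D' 0 = 0 := by
    simp only [hD'_def, hA_def, hB_def, mul_zero, Real.exp_zero, mul_one]
    norm_num
    ring_nf
  have hDdiff : Differentiable ℝ (fun x => x^2/8 - Real.log (A x + B x)) :=
    fun x => (hD x).differentiableAt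
  have hD0 : (fun x => x^2/8 - Real.log (A x + B x)) 0 = 0 := by
    simp only [hA_def, hB_def, mul_zero, Real.exp_zero, mul_one]
    norm_num
  have hfinal : ∀ x, 0 ≤ x^2/8 - Real.log (A x + B x) := by
    intro x
    rcases le_total 0 x with hx | hx
    · have hmono : MonotoneOn (fun x => x^2/8 - Real.log (A x + B x)) (Set.Ici 0) := by
        refine monotoneOn_of_deriv_nonneg (convex_Ici 0) hDdiff.continuous.continuousOn
          (hDdiff.differentiableOn) (fun y hy => ?_)
        rw [(hD y).deriv]
        have : (0:ℝ) ≤ y := le_of_lt (by simpa [interior_Ici] using hy)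
        calc (0:ℝ) = D' 0 := hD'0.symm
        _ ≤ D' y := hD'mono this
      have := hmono (Set.self_mem_Ici) (Set.mem_Ici.2 hx) hx
      rw [hD0] at this; exact this
    · have hanti : AntitoneOn (fun x => x^2/8 - Real.log (A x + B x)) (Set.Iic 0) := by
        refine antitoneOn_of_deriv_nonpos (convex_Iic 0) hDdiff.continuous.continuousOn
          (hDdiff.differentiableOn) (fun y hy => ?_)
        rw [(hD y).deriv]
        have : y ≤ (0:ℝ) := le_of_lt (by simpa [interior_Iic] using hy)
        calc D' y ≤ D' 0 := hD'mono this
        _ = 0 := hD'0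
      have := hanti (Set.mem_Iic.2 hx) (Set.self_mem_Iic) hx
      rw [hD0] at this; exact this
  have hlog : Real.log (A h + B h) ≤ h^2/8 := by have := hfinal h; linarith
  have := (Real.log_le_iff_le_exp (hφpos h)).1 hlog
  simpa [hA_def, hB_def] using this

lemma hoeffding_mgf {Ω : Type*} [MeasurableSpace Ω] (μ : Measure Ω) [IsProbabilityMeasure μ]
    (X : Ω → ℝ) (hX : Measurable X) (hr : ∀ ω, X ω ∈ Set.Icc (0:ℝ) 1)
    {p : ℝ} (hp : ∫ ω, X ω ∂μ = p) (c : ℝ) :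
    ∫ ω, Real.exp (c * (X ω - p)) ∂μ ≤ Real.exp (c^2/8) := by
  have hXint : Integrable X μ := by
    refine Integrable.mono' (integrable_const 1) hX.aestronglyMeasurable
      (Filter.Eventually.of_forall fun ω => ?_)
    rw [Real.norm_eq_abs, abs_le]
    exact ⟨by linarith [(hr ω).1], (hr ω).2⟩
  have hp0 : 0 ≤ p := hp ▸ integral_nonneg fun ω => (hr ω).1
  have hp1 : p ≤ 1 := by
    rw [← hp]
    have h1 : ∫ ω, X ω ∂μ ≤ ∫ _ω, (1:ℝ) ∂μ :=
      integral_mono hXint (integrable_const 1) (fun ω => (hr ω).2)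
    simpa using h1
  -- pointwise convexity bound
  have hpt : ∀ ω, Real.exp (c * (X ω - p))
      ≤ (1 - X ω) * Real.exp (-p*c) + X ω * Real.exp ((1-p)*c) := by
    intro ω
    have h1 : c * (X ω - p) = (1 - X ω) * (-p*c) + X ω * ((1-p)*c) := by ring
    rw [h1]
    exact convexOn_exp.2 (Set.mem_univ (-p*c)) (Set.mem_univ ((1-p)*c))
      (by linarith [(hr ω).2]) (hr ω).1 (by ring)
  have hint1 : Integrable (fun ω => Real.exp (c * (X ω - p))) μ := by
    refine Integrable.mono' (integrable_const (Real.exp |c|))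
      (((hX.sub measurable_const).const_mul c).exp).aestronglyMeasurable
      (Filter.Eventually.of_forall fun ω => ?_)
    rw [Real.norm_eq_abs, abs_of_pos (Real.exp_pos _)]
    apply Real.exp_le_exp.2
    calc c * (X ω - p) ≤ |c * (X ω - p)| := le_abs_self _
    _ = |c| * |X ω - p| := abs_mul _ _
    _ ≤ |c| * 1 := by
        refine mul_le_mul_of_nonneg_left ?_ (abs_nonneg c)
        rw [abs_le]; constructor <;> [linarith [(hr ω).1]; linarith [(hr ω).2]]
    _ = |c| := mul_one _
  have hi1 : Integrable (fun ω => (1 - X ω) * Real.exp (-p*c)) μ :=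
    ((integrable_const (1:ℝ)).sub hXint).mul_const _
  have hi2 : Integrable (fun ω => X ω * Real.exp ((1-p)*c)) μ := hXint.mul_const _
  have hint2 : Integrable (fun ω => (1 - X ω) * Real.exp (-p*c) + X ω * Real.exp ((1-p)*c)) μ :=
    hi1.add hi2
  calc ∫ ω, Real.exp (c * (X ω - p)) ∂μ
      ≤ ∫ ω, ((1 - X ω) * Real.exp (-p*c) + X ω * Real.exp ((1-p)*c)) ∂μ :=
        integral_mono hint1 hint2 hpt
    _ = (1-p) * Real.exp (-p*c) + p * Real.exp ((1-p)*c) := by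
        rw [integral_add hi1 hi2, integral_mul_const, integral_mul_const,
          integral_sub (integrable_const 1) hXint, hp]
        simp
    _ ≤ Real.exp (c^2/8) := hoeffding_aux p hp0 hp1 c

/-- Maximal Hoeffding inequality via Doob. -/
lemma max_hoeffding {Ω : Type*} [m0 : MeasurableSpace Ω] (μ : Measure Ω) [IsProbabilityMeasure μ]
    (X : ℕ → Ω → ℝ) (p : ℝ) (hmeas : ∀ k, Measurable (X k))
    (hindep : iIndepFun X μ)
    (hrange : ∀ k ω, X k ω ∈ Set.Icc (0:ℝ) 1)
    (hmean : ∀ k, ∫ ω, X k ω ∂μ = p)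
    (n : ℕ) (hn : 1 ≤ n) (x : ℝ) (hx : 0 < x) :
    μ {ω | ∃ s ∈ Finset.Icc 1 n, (∑ k ∈ Finset.Icc 1 s, X k ω) - s * p ≥ x}
      ≤ ENNReal.ofReal (Real.exp (-2 * x^2 / n)) := by
  have hp0 : 0 ≤ p := (hmean 1) ▸ integral_nonneg fun ω => (hrange 1 ω).1
  have hnR : (0:ℝ) < n := by exact_mod_cast hn
  set c : ℝ := 4 * x / n with hc_def
  have hc : 0 < c := by positivity
  set S : ℕ → Ω → ℝ := fun s ω => ∑ k ∈ Finset.Icc 1 s, X k ω with hS_def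
  set f : ℕ → Ω → ℝ := fun s ω => Real.exp (c * (S s ω - s * p)) with hf_def
  set ℱ := MeasureTheory.Filtration.natural X (fun k => (hmeas k).stronglyMeasurable) with hℱ_def
  have hXad : ∀ k, StronglyMeasurable[ℱ k] (X k) :=
    MeasureTheory.Filtration.stronglyAdapted_natural (fun k => (hmeas k).stronglyMeasurable)
  have hSmeas : ∀ s, Measurable[ℱ s] (S s) := by
    intro s
    refine Finset.measurable_sum _ (fun k hk => ?_)
    exact ((hXad k).measurable).mono (ℱ.mono (Finset.mem_Icc.1 hk).2) le_rfl
  have hfmeas : ∀ s, StronglyMeasurable[ℱ s] (f s) := by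
    intro s
    exact (measurable_exp.comp (((hSmeas s).sub measurable_const).const_mul c)).stronglyMeasurable
  have hadp : StronglyAdapted ℱ f := hfmeas
  have hfpos : ∀ s ω, 0 < f s ω := fun s ω => Real.exp_pos _
  have hfbdd : ∀ s ω, f s ω ≤ Real.exp (c * s) := by
    intro s ω
    apply Real.exp_le_exp.2
    have hS_le : S s ω ≤ s := by
      calc S s ω ≤ ∑ k ∈ Finset.Icc 1 s, (1:ℝ) :=
        Finset.sum_le_sum fun k _ => (hrange k ω).2
      _ = s := by simp [Nat.card_Icc]
    have : S s ω - s * p ≤ s := by nlinarith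
    nlinarith
  have hfint : ∀ s, Integrable (f s) μ := by
    intro s
    refine Integrable.mono' (integrable_const (Real.exp (c * s)))
      ((hfmeas s).mono (ℱ.le s)).aestronglyMeasurable
      (Filter.Eventually.of_forall fun ω => ?_)
    rw [Real.norm_eq_abs, abs_of_pos (hfpos s ω)]
    exact hfbdd s ω
  -- the one-step factor g and its properties
  have hgint : ∀ k, Integrable (fun ω => Real.exp (c * (X k ω - p))) μ := by
    intro k
    refine Integrable.mono' (integrable_const (Real.exp c))
      (((hmeas k).sub measurable_const).const_mul c).exp.aestronglyMeasurable
      (Filter.Eventually.of_forall fun ω => ?_)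
    rw [Real.norm_eq_abs, abs_of_pos (Real.exp_pos _)]
    apply Real.exp_le_exp.2
    have := (hrange k ω).2
    nlinarith
  have hgmean : ∀ k, 1 ≤ ∫ ω, Real.exp (c * (X k ω - p)) ∂μ := by
    intro k
    have h1 : ∀ ω, 1 + c * (X k ω - p) ≤ Real.exp (c * (X k ω - p)) := by
      intro ω
      have := Real.add_one_le_exp (c * (X k ω - p))
      linarith
    have hXint : Integrable (X k) μ := by
      refine Integrable.mono' (integrable_const 1) (hmeas k).aestronglyMeasurable
        (Filter.Eventually.of_forall fun ω => ?_)
      rw [Real.norm_eq_abs, abs_le]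
      exact ⟨by linarith [(hrange k ω).1], (hrange k ω).2⟩
    have h3 : Integrable (fun ω => c * (X k ω - p)) μ :=
      (hXint.sub (integrable_const p)).const_mul c
    have h2 : Integrable (fun ω => 1 + c * (X k ω - p)) μ := (integrable_const 1).add h3
    calc (1:ℝ) = ∫ ω, (1 + c * (X k ω - p)) ∂μ := by
          rw [integral_add (integrable_const 1) h3,
            integral_const_mul, integral_sub hXint (integrable_const p), hmean k]
          simp
    _ ≤ ∫ ω, Real.exp (c * (X k ω - p)) ∂μ := integral_mono h2 (hgint k) h1
  -- submartingale property
  have hsub : Submartingale f ℱ μ := by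
    refine submartingale_nat hadp hfint (fun i => ?_)
    set g : Ω → ℝ := fun ω => Real.exp (c * (X (i+1) ω - p)) with hg_def
    have hkey : f (i+1) = f i * g := by
      funext ω
      simp only [Pi.mul_apply, hg_def, hf_def, hS_def, ← Real.exp_add]
      congr 1
      rw [Finset.sum_Icc_succ_top (by omega : 1 ≤ i + 1)]
      push_cast
      ring
    have hgsm : StronglyMeasurable[MeasurableSpace.comap (X (i+1)) inferInstance] g := by
      have hXm : Measurable[MeasurableSpace.comap (X (i+1)) inferInstance] (X (i+1)) :=
        measurable_iff_comap_le.2 le_rfl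
      exact (measurable_exp.comp ((hXm.sub measurable_const).const_mul c)).stronglyMeasurable
    have hIndep : Indep (MeasurableSpace.comap (X (i+1)) inferInstance) (ℱ i) μ := by
      have hd : Disjoint ({i+1} : Set ℕ) {k | k ≤ i} := by
        simp only [Set.disjoint_left, Set.mem_singleton_iff, Set.mem_setOf_eq]
        rintro a rfl
        omega
      have h := indep_iSup_of_disjoint (fun k => (hmeas k).comap_le) hindep.iIndep hd
      rwa [_root_.iSup_singleton] at h
    have h2 : μ[g | ℱ i] =ᵐ[μ] fun _ => ∫ ω, g ω ∂μ :=
      condExp_indep_eq ((hmeas (i+1)).comap_le) (ℱ.le i) hgsm hIndep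
    have h1 : μ[f (i+1) | ℱ i] =ᵐ[μ] f i * μ[g | ℱ i] := by
      rw [hkey]
      exact condExp_mul_of_stronglyMeasurable_left (hfmeas i) (hkey ▸ hfint (i+1)) (hgint (i+1))
    filter_upwards [h1, h2] with ω hω1 hω2
    rw [hω1, Pi.mul_apply, hω2]
    calc f i ω = f i ω * 1 := (mul_one _).symm
    _ ≤ f i ω * ∫ ω, g ω ∂μ :=
        mul_le_mul_of_nonneg_left (hgmean (i+1)) (hfpos i ω).le
  -- apply Doob's maximal inequality
  set ε : NNReal := (Real.exp (c*x)).toNNReal with hε_def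
  have hεR : (ε : ℝ) = Real.exp (c*x) := Real.coe_toNNReal _ (Real.exp_pos _).le
  have hnonneg : (0:ℕ → Ω → ℝ) ≤ f := fun s ω => (hfpos s ω).le
  have hmax := maximal_ineq hsub hnonneg (ε := ε) n
  set bigSet := {ω | (ε:ℝ) ≤ (Finset.range (n+1)).sup' Finset.nonempty_range_add_one
      fun k => f k ω} with hbig_def
  have hincl : {ω | ∃ s ∈ Finset.Icc 1 n, (∑ k ∈ Finset.Icc 1 s, X k ω) - s * p ≥ x}
      ⊆ bigSet := by
    rintro ω ⟨s, hs, hge⟩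
    have hs' := Finset.mem_Icc.1 hs
    have hmem : s ∈ Finset.range (n+1) := Finset.mem_range.2 (by omega)
    have hge' : x ≤ S s ω - s * p := hge
    have hfs : Real.exp (c*x) ≤ f s ω := Real.exp_le_exp.2 (by nlinarith)
    refine le_trans ?_ (Finset.le_sup' (fun k => f k ω) hmem)
    rw [hεR]; exact hfs
  -- bound the mean of f n
  have h7 : ∫ ω, f n ω ∂μ ≤ Real.exp (n * c^2/8) := by
    have hYindep : iIndepFun
        (fun k => (fun y => y - p) ∘ X k) μ :=
      hindep.comp _ (fun k => measurable_id.sub measurable_const)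
    have hYmeas : ∀ k, Measurable ((fun y => y - p) ∘ X k) :=
      fun k => (hmeas k).sub measurable_const
    have hmgf := hYindep.mgf_sum hYmeas (Finset.Icc 1 n) (t := c)
    have heq : ∫ ω, f n ω ∂μ = mgf (∑ i ∈ Finset.Icc 1 n, (fun y => y - p) ∘ X i) μ c := by
      simp only [mgf, hf_def, hS_def]
      congr 1
      funext ω
      congr 1
      rw [Finset.sum_apply]
      simp only [Function.comp_apply]
      rw [Finset.sum_sub_distrib]
      simp [Nat.card_Icc]
    rw [heq, hmgf]
    calc ∏ i ∈ Finset.Icc 1 n, mgf ((fun y => y - p) ∘ X i) μ c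
        ≤ ∏ _i ∈ Finset.Icc 1 n, Real.exp (c^2/8) := by
          refine Finset.prod_le_prod (fun i _ => mgf_nonneg) (fun i _ => ?_)
          exact hoeffding_mgf μ (X i) (hmeas i) (hrange i) (hmean i) c
    _ = Real.exp (c^2/8) ^ n := by rw [Finset.prod_const, Nat.card_Icc]; norm_num
    _ = Real.exp (n * c^2/8) := by rw [← Real.exp_nat_mul]; ring_nf
  have h6 : ∫ ω in bigSet, f n ω ∂μ ≤ ∫ ω, f n ω ∂μ :=
    setIntegral_le_integral (hfint n) (Filter.Eventually.of_forall fun ω => (hfpos n ω).le)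
  have hεne : (ε : ENNReal) ≠ 0 := by
    simp only [ne_eq, ENNReal.coe_eq_zero]
    intro h
    have := hεR
    rw [h] at this
    exact absurd this.symm (ne_of_gt (Real.exp_pos _))
  have hεnetop : (ε : ENNReal) ≠ ⊤ := ENNReal.coe_ne_top
  have hmain : μ bigSet ≤ (ε : ENNReal)⁻¹ * ENNReal.ofReal (Real.exp (n * c^2/8)) := by
    calc μ bigSet = (ε:ENNReal)⁻¹ * ((ε:ENNReal) * μ bigSet) := by
          rw [← mul_assoc, ENNReal.inv_mul_cancel hεne hεnetop, one_mul]
    _ ≤ (ε:ENNReal)⁻¹ * ENNReal.ofReal (Real.exp (n * c^2/8)) := by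
        refine mul_le_mul_right ?_ _
        refine le_trans ?_ (ENNReal.ofReal_le_ofReal (le_trans h6 h7))
        simpa [ENNReal.smul_def, smul_eq_mul] using hmax
  have hεinv : (ε : ENNReal)⁻¹ = ENNReal.ofReal (Real.exp (-(c*x))) := by
    have h1 : (ε : ENNReal) = ENNReal.ofReal (Real.exp (c*x)) := by
      rw [← hεR, ENNReal.ofReal_coe_nnreal]
    rw [h1, ← ENNReal.ofReal_inv_of_pos (Real.exp_pos _), Real.exp_neg]
  calc μ {ω | ∃ s ∈ Finset.Icc 1 n, (∑ k ∈ Finset.Icc 1 s, X k ω) - s * p ≥ x}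
      ≤ μ bigSet := measure_mono hincl
  _ ≤ (ε : ENNReal)⁻¹ * ENNReal.ofReal (Real.exp (n * c^2/8)) := hmain
  _ = ENNReal.ofReal (Real.exp (-(c*x)) * Real.exp (n * c^2/8)) := by
      rw [hεinv, ← ENNReal.ofReal_mul (Real.exp_pos _).le]
  _ = ENNReal.ofReal (Real.exp (-2 * x^2 / n)) := by
      rw [← Real.exp_add]
      congr 1
      rw [hc_def]
      field_simp
      ring


/-- Anytime lower-confidence-bound deviation inequality (Eq. (15) of Lemma 6):
for an i.i.d. sequence of `[0,1]`-valued random variables with mean `p`, the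
probability that the LCB `S_s/s - √(α log t / s)` falls at or above `p` for some
`s ∈ {1,…,t}` is at most `(log t / log(α+1/2) + 1) · t^{−2α/(α+1/2)}`. -/
theorem stmt_2 {Ω : Type*} [MeasurableSpace Ω] (μ : Measure Ω) [IsProbabilityMeasure μ]
    (X : ℕ → Ω → ℝ) (p : ℝ)
    (hmeas : ∀ k, Measurable (X k))
    (hindep : iIndepFun X μ)
    (hident : ∀ k, IdentDistrib (X k) (X 1) μ μ)
    (hrange : ∀ k ω, X k ω ∈ Set.Icc (0 : ℝ) 1)
    (hmean : ∀ k, ∫ ω, X k ω ∂μ = p)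
    (α : ℝ) (hα : 1/2 < α) (t : ℕ) (ht : 2 ≤ t) :
    μ {ω | ∃ s ∈ Finset.Icc 1 t,
        (∑ k ∈ Finset.Icc 1 s, X k ω) / (s : ℝ)
          - Real.sqrt (α * Real.log t / (s : ℝ)) ≥ p}
      ≤ ENNReal.ofReal
          ((Real.log t / Real.log (α + 1/2) + 1) * (t : ℝ) ^ (-(2 * α) / (α + 1/2))) := by
  have hα0 : 0 < α := by linarith
  set β : ℝ := α + 1/2 with hβ_def
  have hβ1 : 1 < β := by simp only [hβ_def]; linarith
  have hβ0 : 0 < β := by linarith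
  have htR : (2:ℝ) ≤ (t:ℝ) := by exact_mod_cast ht
  have hlogt : 0 < Real.log t := Real.log_pos (by linarith)
  have hlogβ : 0 < Real.log β := Real.log_pos hβ1
  set J : ℕ := ⌊Real.log t / Real.log β⌋₊ with hJ_def
  set T : ℝ := (t : ℝ) ^ (-(2 * α) / β) with hT_def
  have hT0 : 0 < T := Real.rpow_pos_of_pos (by linarith) _
  -- the peeled events
  set E : ℕ → Set Ω := fun j => {ω | ∃ s ∈ Finset.Icc 1 ⌊β^(j+1)⌋₊,
      (∑ k ∈ Finset.Icc 1 s, X k ω) - s * p ≥ Real.sqrt (α * β^j * Real.log t)} with hE_def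
  -- each peeled event has small measure
  have hEbound : ∀ j, μ (E j) ≤ ENNReal.ofReal T := by
    intro j
    have hβj : (0:ℝ) < β^j := pow_pos hβ0 j
    have hβj1 : (1:ℝ) ≤ β^(j+1) := one_le_pow₀ hβ1.le
    have hnj : 1 ≤ ⌊β^(j+1)⌋₊ := Nat.le_floor (by exact_mod_cast hβj1)
    have hxj : 0 < Real.sqrt (α * β^j * Real.log t) :=
      Real.sqrt_pos.2 (by positivity)
    refine le_trans (max_hoeffding μ X p hmeas hindep hrange hmean _ hnj _ hxj) ?_
    apply ENNReal.ofReal_le_ofReal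
    have hsq : Real.sqrt (α * β^j * Real.log t) ^ 2 = α * β^j * Real.log t :=
      Real.sq_sqrt (by positivity)
    have hTexp : T = Real.exp (-(2*α)/β * Real.log t) := by
      rw [hT_def, Real.rpow_def_of_pos (by linarith : (0:ℝ) < (t:ℝ))]
      ring_nf
    rw [hsq, hTexp]
    apply Real.exp_le_exp.2
    have hfl0 : (0:ℝ) < (⌊β^(j+1)⌋₊ : ℝ) := by exact_mod_cast hnj
    have hfl : ((⌊β^(j+1)⌋₊ : ℕ) : ℝ) ≤ β^(j+1) := Nat.floor_le (by positivity)
    have h2 : 2 * (α * β^j * Real.log t) / β^(j+1) ≤ 2 * (α * β^j * Real.log t) / ⌊β^(j+1)⌋₊ :=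
      div_le_div_of_nonneg_left (by positivity) hfl0 hfl
    have h3 : 2 * (α * β^j * Real.log t) / β^(j+1) = (2*α)/β * Real.log t := by
      rw [pow_succ]
      field_simp
    calc -2 * (α * β^j * Real.log t) / ⌊β^(j+1)⌋₊
        = -(2 * (α * β^j * Real.log t) / ⌊β^(j+1)⌋₊) := by ring
    _ ≤ -(2 * (α * β^j * Real.log t) / β^(j+1)) := neg_le_neg h2
    _ = -(2*α)/β * Real.log t := by rw [h3]; ring
  -- inclusion of the main event in the union of peeled events
  have hincl : {ω | ∃ s ∈ Finset.Icc 1 t,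
        (∑ k ∈ Finset.Icc 1 s, X k ω) / (s : ℝ)
          - Real.sqrt (α * Real.log t / (s : ℝ)) ≥ p}
      ⊆ ⋃ j ∈ Finset.range (J+1), E j := by
    rintro ω ⟨s, hs, hge⟩
    have hs' := Finset.mem_Icc.1 hs
    have hs1 : (1:ℝ) ≤ (s:ℝ) := by exact_mod_cast hs'.1
    have hst : (s:ℝ) ≤ (t:ℝ) := by exact_mod_cast hs'.2
    have hspos : (0:ℝ) < (s:ℝ) := by linarith
    set j : ℕ := ⌊Real.log s / Real.log β⌋₊ with hj_def
    have hlogs : 0 ≤ Real.log s := Real.log_nonneg hs1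
    have hloglog : Real.log s / Real.log β ≤ Real.log t / Real.log β := by
      gcongr
    have hjle : j ≤ J := Nat.floor_le_floor hloglog
    have hmem : j ∈ Finset.range (J+1) := Finset.mem_range.2 (by omega)
    refine Set.mem_biUnion hmem ?_
    -- s ≤ ⌊β^(j+1)⌋₊
    have hlt : Real.log s / Real.log β < (j:ℝ) + 1 := Nat.lt_floor_add_one _
    have hlt2 : Real.log s < ((j:ℝ) + 1) * Real.log β := by
      rw [div_lt_iff₀ hlogβ] at hlt
      linarith
    have hsle : (s:ℝ) ≤ β^(j+1) := by
      have h1 : (s:ℝ) = Real.exp (Real.log s) := (Real.exp_log hspos).symm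
      have h2 : β^(j+1) = Real.exp (((j:ℝ)+1) * Real.log β) := by
        rw [← Real.rpow_natCast β (j+1), Real.rpow_def_of_pos hβ0]
        congr 1
        push_cast
        ring
      rw [h1, h2]
      exact (Real.exp_le_exp.2 hlt2.le)
    have hmem2 : s ∈ Finset.Icc 1 ⌊β^(j+1)⌋₊ :=
      Finset.mem_Icc.2 ⟨hs'.1, Nat.le_floor hsle⟩
    -- β^j ≤ s
    have hβjs : β^j ≤ (s:ℝ) := by
      have h1 : (j:ℝ) ≤ Real.log s / Real.log β := Nat.floor_le (by positivity)
      have h2 : (j:ℝ) * Real.log β ≤ Real.log s := (le_div_iff₀ hlogβ).1 h1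
      have h3 : β^j = Real.exp ((j:ℝ) * Real.log β) := by
        rw [← Real.rpow_natCast β j, Real.rpow_def_of_pos hβ0]
        congr 1
        ring
      rw [h3, ← Real.exp_log hspos]
      exact Real.exp_le_exp.2 h2
    refine ⟨s, hmem2, ?_⟩
    -- the deviation bound
    have hkey : (s:ℝ) * Real.sqrt (α * Real.log t / (s:ℝ))
        = Real.sqrt (α * (s:ℝ) * Real.log t) := by
      rw [show (s:ℝ) = Real.sqrt ((s:ℝ)^2) by rw [Real.sqrt_sq hspos.le]]
      rw [← Real.sqrt_mul (sq_nonneg _)]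
      rw [Real.sqrt_sq hspos.le]
      congr 1
      field_simp
    have hτ : Real.sqrt (α * β^j * Real.log t) ≤ Real.sqrt (α * (s:ℝ) * Real.log t) :=
      Real.sqrt_le_sqrt (mul_le_mul_of_nonneg_right (mul_le_mul_of_nonneg_left hβjs hα0.le) hlogt.le)
    have hge2 : p + Real.sqrt (α * Real.log t / (s:ℝ))
        ≤ (∑ k ∈ Finset.Icc 1 s, X k ω) / (s:ℝ) := by
      have := hge
      simp only [ge_iff_le] at this
      linarith
    have hge3 : (p + Real.sqrt (α * Real.log t / (s:ℝ))) * (s:ℝ)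
        ≤ ∑ k ∈ Finset.Icc 1 s, X k ω := (le_div_iff₀ hspos).1 hge2
    show (∑ k ∈ Finset.Icc 1 s, X k ω) - s * p ≥ Real.sqrt (α * β^j * Real.log t)
    have : (s:ℝ) * Real.sqrt (α * Real.log t / (s:ℝ)) ≤ (∑ k ∈ Finset.Icc 1 s, X k ω) - s * p := by
      nlinarith
    rw [hkey] at this
    linarith
  -- union bound
  calc μ {ω | ∃ s ∈ Finset.Icc 1 t,
        (∑ k ∈ Finset.Icc 1 s, X k ω) / (s : ℝ)
          - Real.sqrt (α * Real.log t / (s : ℝ)) ≥ p}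
      ≤ μ (⋃ j ∈ Finset.range (J+1), E j) := measure_mono hincl
  _ ≤ ∑ j ∈ Finset.range (J+1), μ (E j) := measure_biUnion_finset_le _ _
  _ ≤ ∑ _j ∈ Finset.range (J+1), ENNReal.ofReal T :=
      Finset.sum_le_sum fun j _ => hEbound j
  _ = ((J+1 : ℕ) : ENNReal) * ENNReal.ofReal T := by
      rw [Finset.sum_const, Finset.card_range, nsmul_eq_mul]
  _ ≤ ENNReal.ofReal ((Real.log t / Real.log β + 1) * T) := by
      have hL : (0:ℝ) ≤ Real.log t / Real.log β := (div_pos hlogt hlogβ).le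
      rw [ENNReal.ofReal_mul (by linarith)]
      refine mul_le_mul_left ?_ _
      rw [← ENNReal.ofReal_natCast (J+1)]
      refine ENNReal.ofReal_le_ofReal ?_
      push_cast
      have := Nat.floor_le hL
      rw [hJ_def] at *
      linarith [Nat.floor_le hL]
end

section
/- Let (X_k)_{k≥1} be an i.i.d. sequence of random variables taking values in [0,1] with common mean p > 1/2, let Δ = p − 1/2, let S_s = X_1 + ⋯ + X_s, and let α > 1/2. For any integer t ≥ 2, the probability that there exists an integer s with 4α·log t / Δ² ≤ s ≤ t and S_s/s − √(α·log t / s) ≤ 1/2 is at most (log t / log(α + 1/2) + 1) · t^{−2α/(α+1/2)}. (This combines the deterministic implication in the proof of Lemma 2 — if s ≥ 4α log t/Δ² then the lower confidence bound being at most 1/2 forces the upper confidence bound S_s/s + √(α log t/s) to be at most p — with the anytime UCB deviation inequality of Lemma 6.) -/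
open MeasureTheory ProbabilityTheory

set_option maxHeartbeats 1000000

section Helpers
open Real



/-- Analytic core of Hoeffding's lemma. -/
lemma hoeff_core {q : ℝ} (hq0 : 0 ≤ q) (hq1 : q ≤ 1) (c : ℝ) :
    (1 - q) + q * Real.exp c ≤ Real.exp (q * c + c ^ 2 / 8) := by
  set u : ℝ → ℝ := fun c => 1 - q + q * Real.exp c with hu_def
  have hu : ∀ c, 0 < u c := by
    intro c
    rcases eq_or_lt_of_le hq0 with h | h
    · simp [hu_def, ← h]
    · have he := Real.exp_pos c
      show 0 < 1 - q + q * Real.exp c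
      nlinarith
  have hu' : ∀ c, HasDerivAt u (q * Real.exp c) c := fun c =>
    ((Real.hasDerivAt_exp c).const_mul q).const_add (1 - q)
  set g : ℝ → ℝ := fun c => q * c + c ^ 2 / 8 - Real.log (u c) with hg_def
  set g1 : ℝ → ℝ := fun c => q + c * 2 / 8 - q * Real.exp c / u c with hg1_def
  have hg : ∀ c, HasDerivAt g (g1 c) c := by
    intro c
    have h1 : HasDerivAt (fun c : ℝ => q * c) (q * 1) c := (hasDerivAt_id c).const_mul q
    have h2 : HasDerivAt (fun c : ℝ => c ^ 2 / 8) (2 * c ^ 1 / 8) c :=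
      (hasDerivAt_pow 2 c).div_const 8
    have h3 : HasDerivAt (fun c => Real.log (u c)) (q * Real.exp c / u c) c :=
      (hu' c).log (hu c).ne'
    have := ((h1.add h2).sub h3)
    refine this.congr_deriv ?_
    simp only [hg1_def]; ring_nf
  have hg1 : ∀ c, HasDerivAt g1 (1 / 4 - q * Real.exp c * (1 - q) / (u c) ^ 2) c := by
    intro c
    have h1 : HasDerivAt (fun c : ℝ => q + c * 2 / 8) (1 * 2 / 8) c :=
      (((hasDerivAt_id c).mul_const 2).div_const 8).const_add q
    have h2 : HasDerivAt (fun c => q * Real.exp c / u c)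
        ((q * Real.exp c * u c - q * Real.exp c * (q * Real.exp c)) / (u c) ^ 2) c :=
      ((Real.hasDerivAt_exp c).const_mul q).div (hu' c) (hu c).ne'
    have := h1.sub h2
    refine this.congr_deriv ?_
    have h3 : u c = 1 - q + q * Real.exp c := rfl
    rw [h3]
    field_simp
    ring
  have hg1mono : Monotone g1 := by
    apply monotone_of_deriv_nonneg (fun c => (hg1 c).differentiableAt)
    intro c
    rw [(hg1 c).deriv]
    have h4 : 4 * (q * Real.exp c) * (1 - q) ≤ (u c) ^ 2 := by
      have h3 : u c = 1 - q + q * Real.exp c := rfl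
      rw [h3]
      nlinarith [sq_nonneg (1 - q - q * Real.exp c)]
    have h5 : (0:ℝ) < (u c) ^ 2 := pow_pos (hu c) 2
    rw [sub_nonneg, div_le_iff₀ h5]
    clear_value u g g1
    linarith
  have hg10 : g1 0 = 0 := by
    have h3 : u 0 = 1 := by simp [hu_def]
    simp [hg1_def, h3]
  have hgcont : Continuous g := by
    have := fun c => (hg c).differentiableAt
    exact (Differentiable.continuous this)
  have hg0 : g 0 = 0 := by
    have h3 : u 0 = 1 := by simp [hu_def]
    simp [hg_def, h3]
  have hgpos : ∀ c, 0 ≤ g c := by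
    intro c
    rcases le_or_gt 0 c with hc | hc
    · have hmono : MonotoneOn g (Set.Ici 0) := by
        apply monotoneOn_of_deriv_nonneg (convex_Ici 0) hgcont.continuousOn
          (fun x _ => (hg x).differentiableAt.differentiableWithinAt)
        intro x hx
        rw [(hg x).deriv]
        have : (0:ℝ) ≤ x := le_of_lt (by simpa using hx)
        calc (0:ℝ) = g1 0 := hg10.symm
          _ ≤ g1 x := hg1mono this
      have := hmono (Set.self_mem_Ici) (Set.mem_Ici.2 hc) hc
      linarith [hg0 ▸ this]
    · have hanti : AntitoneOn g (Set.Iic 0) := by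
        apply antitoneOn_of_deriv_nonpos (convex_Iic 0) hgcont.continuousOn
          (fun x _ => (hg x).differentiableAt.differentiableWithinAt)
        intro x hx
        rw [(hg x).deriv]
        have hx0 : x ≤ (0:ℝ) := le_of_lt (by simpa using hx)
        calc g1 x ≤ g1 0 := hg1mono hx0
          _ = 0 := hg10
      have := hanti (Set.mem_Iic.2 hc.le) (Set.self_mem_Iic) hc.le
      linarith [hg0 ▸ this]
  have hlog : Real.log (u c) ≤ q * c + c ^ 2 / 8 := by
    have := hgpos c
    simp only [hg_def] at this
    linarith
  calc (1 - q) + q * Real.exp c = u c := rfl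
    _ = Real.exp (Real.log (u c)) := (Real.exp_log (hu c)).symm
    _ ≤ Real.exp (q * c + c ^ 2 / 8) := Real.exp_le_exp.2 hlog

variable {Ω : Type*} [MeasurableSpace Ω] {μ : Measure Ω} [IsProbabilityMeasure μ]

lemma integrable_of_abs_le {f : Ω → ℝ} (hf : Measurable f) (C : ℝ) (h : ∀ ω, |f ω| ≤ C) :
    Integrable f μ :=
  ⟨hf.aestronglyMeasurable, HasFiniteIntegral.of_bounded (C := C) (ae_of_all _ fun ω => by
    simpa [Real.norm_eq_abs] using h ω)⟩

lemma mgf_upper {f : Ω → ℝ} (hf : Measurable f) (hr : ∀ ω, f ω ∈ Set.Icc (0:ℝ) 1)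
    {q : ℝ} (hq : ∫ ω, f ω ∂μ = q) (c : ℝ) :
    ∫ ω, Real.exp (c * f ω) ∂μ ≤ Real.exp (q * c + c ^ 2 / 8) := by
  have hint_f : Integrable f μ :=
    integrable_of_abs_le hf 1 fun ω => abs_le.2 ⟨by linarith [(hr ω).1], (hr ω).2⟩
  have hq0 : 0 ≤ q := hq ▸ integral_nonneg fun ω => (hr ω).1
  have hq1 : q ≤ 1 := by
    rw [← hq]
    calc ∫ ω, f ω ∂μ ≤ ∫ _, (1:ℝ) ∂μ := integral_mono hint_f (integrable_const 1)
          fun ω => (hr ω).2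
      _ = 1 := by simp
  have hpt : ∀ ω, Real.exp (c * f ω) ≤ (1 - f ω) + f ω * Real.exp c := by
    intro ω
    have h0 : (0:ℝ) ≤ 1 - f ω := by linarith [(hr ω).2]
    have h1 : (0:ℝ) ≤ f ω := (hr ω).1
    have := convexOn_exp.2 (Set.mem_univ (0:ℝ)) (Set.mem_univ c) h0 h1 (by ring)
    simp only [smul_eq_mul, mul_zero, zero_add, Real.exp_zero, mul_one] at this
    calc Real.exp (c * f ω) = Real.exp (f ω * c) := by rw [mul_comm]
      _ ≤ (1 - f ω) * 1 + f ω * Real.exp c := by simpa using this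
      _ = (1 - f ω) + f ω * Real.exp c := by ring
  have hint_l : Integrable (fun ω => Real.exp (c * f ω)) μ := by
    refine integrable_of_abs_le ((hf.const_mul c).exp) (Real.exp |c|) fun ω => ?_
    rw [abs_of_pos (Real.exp_pos _)]
    apply Real.exp_le_exp.2
    calc c * f ω ≤ |c| * f ω := mul_le_mul_of_nonneg_right (le_abs_self c) (hr ω).1
      _ ≤ |c| * 1 := mul_le_mul_of_nonneg_left (hr ω).2 (abs_nonneg c)
      _ = |c| := mul_one _
  have hint_r : Integrable (fun ω => (1 - f ω) + f ω * Real.exp c) μ :=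
    ((integrable_const (1:ℝ)).sub hint_f).add (hint_f.mul_const _)
  calc ∫ ω, Real.exp (c * f ω) ∂μ ≤ ∫ ω, ((1 - f ω) + f ω * Real.exp c) ∂μ :=
        integral_mono hint_l hint_r hpt
    _ = (1 - q) + q * Real.exp c := by
        have h1 : ∫ ω, ((1 - f ω) + f ω * Real.exp c) ∂μ
            = (∫ ω, (1 - f ω) ∂μ) + ∫ ω, (f ω * Real.exp c) ∂μ :=
          integral_add ((integrable_const (1:ℝ)).sub hint_f) (hint_f.mul_const _)
        have h2 : ∫ ω, (1 - f ω) ∂μ = (∫ _ω, (1:ℝ) ∂μ) - ∫ ω, f ω ∂μ :=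
          integral_sub (integrable_const (1:ℝ)) hint_f
        have h3 : ∫ ω, (f ω * Real.exp c) ∂μ = (∫ ω, f ω ∂μ) * Real.exp c :=
          integral_mul_const _ _
        rw [h1, h2, h3, hq]
        simp
    _ ≤ Real.exp (q * c + c ^ 2 / 8) := hoeff_core hq0 hq1 c

lemma exp_integral_le {f : Ω → ℝ} (hf : Measurable f) (C : ℝ) (h : ∀ ω, |f ω| ≤ C) :
    Real.exp (∫ ω, f ω ∂μ) ≤ ∫ ω, Real.exp (f ω) ∂μ := by
  set m := ∫ ω, f ω ∂μ with hm
  have hint_f : Integrable f μ := integrable_of_abs_le hf C h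
  have hpt : ∀ ω, Real.exp m + Real.exp m * (f ω - m) ≤ Real.exp (f ω) := by
    intro ω
    have h1 := Real.add_one_le_exp (f ω - m)
    calc Real.exp m + Real.exp m * (f ω - m) = Real.exp m * ((f ω - m) + 1) := by ring
      _ ≤ Real.exp m * Real.exp (f ω - m) :=
          mul_le_mul_of_nonneg_left h1 (Real.exp_pos m).le
      _ = Real.exp (f ω) := by rw [← Real.exp_add]; ring_nf
  have hint_r : Integrable (fun ω => Real.exp (f ω)) μ := by
    refine integrable_of_abs_le hf.exp (Real.exp C) fun ω => ?_
    rw [abs_of_pos (Real.exp_pos _)]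
    exact Real.exp_le_exp.2 (le_trans (le_abs_self _) (h ω))
  have hint_l : Integrable (fun ω => Real.exp m + Real.exp m * (f ω - m)) μ :=
    (integrable_const _).add ((hint_f.sub (integrable_const m)).const_mul _)
  calc Real.exp m = ∫ ω, (Real.exp m + Real.exp m * (f ω - m)) ∂μ := by
        have h1 : ∫ ω, (Real.exp m + Real.exp m * (f ω - m)) ∂μ
            = (∫ _ω, Real.exp m ∂μ) + ∫ ω, (Real.exp m * (f ω - m)) ∂μ :=
          integral_add (integrable_const _) ((hint_f.sub (integrable_const m)).const_mul _)
        have h2 : ∫ ω, (Real.exp m * (f ω - m)) ∂μ = Real.exp m * ∫ ω, (f ω - m) ∂μ :=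
          integral_const_mul _ _
        have h3 : ∫ ω, (f ω - m) ∂μ = (∫ ω, f ω ∂μ) - ∫ _ω, m ∂μ :=
          integral_sub hint_f (integrable_const m)
        rw [h1, h2, h3]
        simp [← hm]
    _ ≤ ∫ ω, Real.exp (f ω) ∂μ := integral_mono hint_l hint_r hpt

lemma maximal_chernoff (μ : Measure Ω) [IsProbabilityMeasure μ]
    (X : ℕ → Ω → ℝ) (p : ℝ)
    (hmeas : ∀ k, Measurable (X k))
    (hindep : iIndepFun X μ)
    (hrange : ∀ k ω, X k ω ∈ Set.Icc (0 : ℝ) 1)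
    (hmean : ∀ k, ∫ ω, X k ω ∂μ = p)
    (m : ℕ) (x lam : ℝ) (hx : 0 < x) (hlam : 0 ≤ lam) :
    (μ {ω | ∃ s : ℕ, 1 ≤ s ∧ s ≤ m ∧ x ≤ p * s - ∑ k ∈ Finset.Icc 1 s, X k ω}).toReal
      ≤ Real.exp (m * lam ^ 2 / 8 - lam * x) := by
  classical
  set D : ℕ → Ω → ℝ := fun s ω => ∑ k ∈ Finset.Icc 1 s, (p - X k ω) with hD_def
  have hD : ∀ s ω, D s ω = p * s - ∑ k ∈ Finset.Icc 1 s, X k ω := by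
    intro s ω
    simp only [hD_def, Finset.sum_sub_distrib, Finset.sum_const, Nat.card_Icc,
      nsmul_eq_mul]
    rw [Nat.add_sub_cancel]
    ring
  have hDmeas : ∀ s, Measurable (D s) := fun s =>
    Finset.measurable_sum _ fun k _ => measurable_const.sub (hmeas k)
  have hDbound : ∀ s ω, |D s ω| ≤ s * (|p| + 1) := by
    intro s ω
    calc |D s ω| ≤ ∑ k ∈ Finset.Icc 1 s, |p - X k ω| := Finset.abs_sum_le_sum_abs _ _
      _ ≤ ∑ _k ∈ Finset.Icc 1 s, (|p| + 1) := by
          refine Finset.sum_le_sum fun k _ => ?_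
          have h1 := (hrange k ω).1
          have h2 := (hrange k ω).2
          rw [abs_le]
          constructor
          · have := neg_abs_le p; linarith
          · have := le_abs_self p; linarith
      _ = s * (|p| + 1) := by
          rw [Finset.sum_const, Nat.card_Icc, Nat.add_sub_cancel, nsmul_eq_mul]
  have hexp_bound : ∀ (c : ℝ) (s : ℕ) (ω : Ω), |Real.exp (c * D s ω)| ≤
      Real.exp (|c| * (s * (|p| + 1))) := by
    intro c s ω
    rw [abs_of_pos (Real.exp_pos _)]
    apply Real.exp_le_exp.2
    calc c * D s ω ≤ |c * D s ω| := le_abs_self _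
      _ = |c| * |D s ω| := abs_mul _ _
      _ ≤ |c| * (s * (|p| + 1)) := by
          apply mul_le_mul_of_nonneg_left (hDbound s ω) (abs_nonneg c)
  have hexp_int : ∀ (c : ℝ) (s : ℕ), Integrable (fun ω => Real.exp (c * D s ω)) μ :=
    fun c s => integrable_of_abs_le (((hDmeas s).const_mul c).exp) _ (hexp_bound c s)
  set B : ℕ → Set Ω := fun s => {ω | x ≤ D s ω ∧ ∀ r, r < s → D r ω < x} with hB_def
  have hBmeas : ∀ s, MeasurableSet (B s) := by
    intro s
    have : B s = {ω | x ≤ D s ω} ∩ ⋂ r, ⋂ (_ : r < s), {ω | D r ω < x} := by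
      ext ω
      simp only [hB_def, Set.mem_setOf_eq, Set.mem_inter_iff, Set.mem_iInter]
    rw [this]
    exact (measurableSet_le measurable_const (hDmeas s)).inter
      (MeasurableSet.iInter fun r => MeasurableSet.iInter fun _ =>
        measurableSet_lt (hDmeas r) measurable_const)
  -- event is contained in the union of the B s
  have hsub : {ω | ∃ s : ℕ, 1 ≤ s ∧ s ≤ m ∧ x ≤ p * s - ∑ k ∈ Finset.Icc 1 s, X k ω}
      ⊆ ⋃ s ∈ Finset.Icc 1 m, B s := by
    rintro ω ⟨s0, hs01, hs0m, hs0x⟩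
    have hex : ∃ s, x ≤ D s ω := ⟨s0, by rw [hD]; exact hs0x⟩
    set s := Nat.find hex with hs_def
    have hspec : x ≤ D s ω := Nat.find_spec hex
    have hmin : ∀ r, r < s → D r ω < x := fun r hr =>
      lt_of_not_ge (Nat.find_min hex hr)
    have hs1 : 1 ≤ s := by
      rcases Nat.eq_zero_or_pos s with h | h
      · exfalso
        rw [h] at hspec
        have : D 0 ω = 0 := by simp [hD_def]
        rw [this] at hspec
        linarith
      · exact h
    have hsm : s ≤ m := le_trans (Nat.find_min' hex (by rw [hD]; exact hs0x)) hs0m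
    exact Set.mem_iUnion₂.2 ⟨s, Finset.mem_Icc.2 ⟨hs1, hsm⟩, hspec, hmin⟩
  -- disjointness
  have hdisjB : (↑(Finset.Icc 1 m) : Set ℕ).Pairwise (Function.onFun Disjoint B) := by
    intro a _ b _ hab
    rcases hab.lt_or_gt with h | h
    · refine Set.disjoint_left.2 fun ω hωa hωb => ?_
      exact absurd hωa.1 (not_le.2 (hωb.2 a h))
    · refine Set.disjoint_left.2 fun ω hωa hωb => ?_
      exact absurd hωb.1 (not_le.2 (hωa.2 b h))
  -- per-block lower bound on the integral
  have hblock : ∀ s ∈ Finset.Icc 1 m,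
      Real.exp (lam * x) * (μ (B s)).toReal ≤ ∫ ω in B s, Real.exp (lam * D m ω) ∂μ := by
    intro s hs
    rw [Finset.mem_Icc] at hs
    obtain ⟨hs1, hsm⟩ := hs
    set S : Finset ℕ := Finset.Icc 1 s with hS_def
    set T : Finset ℕ := Finset.Icc (s+1) m with hT_def
    have hST : Disjoint S T := by
      rw [Finset.disjoint_left]
      intro k hk hk'
      rw [hS_def, Finset.mem_Icc] at hk
      rw [hT_def, Finset.mem_Icc] at hk'
      omega
    have hsplit : Finset.Icc 1 m = S ∪ T := by
      ext k
      simp only [hS_def, hT_def, Finset.mem_union, Finset.mem_Icc]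
      omega
    set DS : ℕ → (↥S → ℝ) → ℝ := fun r v =>
      ∑ k ∈ Finset.Icc 1 r, (p - if h : k ∈ S then v ⟨k, h⟩ else 0) with hDS_def
    have hDSmeas : ∀ r, Measurable (DS r) := by
      intro r
      apply Finset.measurable_sum
      intro k _
      apply measurable_const.sub
      by_cases h : k ∈ S
      · simp only [h, dif_pos]
        exact measurable_pi_apply _
      · simp only [h, dif_neg, not_false_iff]
        exact measurable_const
    have hDSeq : ∀ r, r ≤ s → ∀ ω, DS r (fun i : ↥S => X i ω) = D r ω := by
      intro r hr ω
      apply Finset.sum_congr rfl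
      intro k hk
      rw [Finset.mem_Icc] at hk
      have hkS : k ∈ S := by rw [hS_def, Finset.mem_Icc]; omega
      rw [dif_pos hkS]
    set Φ : (↥S → ℝ) → ℝ := fun v =>
      if x ≤ DS s v ∧ ∀ r, r < s → DS r v < x then Real.exp (lam * DS s v) else 0
      with hΦ_def
    have hΦmeas : Measurable Φ := by
      apply Measurable.ite
      · have : {v : ↥S → ℝ | x ≤ DS s v ∧ ∀ r, r < s → DS r v < x}
            = {v | x ≤ DS s v} ∩ ⋂ r, ⋂ (_ : r < s), {v | DS r v < x} := by
          ext v
          simp only [Set.mem_setOf_eq, Set.mem_inter_iff, Set.mem_iInter]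
        rw [this]
        exact (measurableSet_le measurable_const (hDSmeas s)).inter
          (MeasurableSet.iInter fun r => MeasurableSet.iInter fun _ =>
            measurableSet_lt (hDSmeas r) measurable_const)
      · exact ((hDSmeas s).const_mul lam).exp
      · exact measurable_const
    set ZT : Ω → ℝ := fun ω => ∑ k ∈ T, (p - X k ω) with hZT_def
    set Ψ : (↥T → ℝ) → ℝ := fun v =>
      Real.exp (lam * ∑ k ∈ T, (p - if h : k ∈ T then v ⟨k, h⟩ else 0)) with hΨ_def
    have hΨmeas : Measurable Ψ := by
      apply Measurable.exp
      apply Measurable.const_mul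
      apply Finset.measurable_sum
      intro k _
      apply measurable_const.sub
      by_cases h : k ∈ T
      · simp only [h, dif_pos]
        exact measurable_pi_apply _
      · simp only [h, dif_neg, not_false_iff]
        exact measurable_const
    set F : Ω → ℝ := fun ω => Φ (fun i : ↥S => X i ω) with hF_def
    set G : Ω → ℝ := fun ω => Ψ (fun i : ↥T => X i ω) with hG_def
    have hFG : IndepFun F G μ :=
      (hindep.indepFun_finset S T hST hmeas).comp hΦmeas hΨmeas
    have hFeq : ∀ ω, F ω = if ω ∈ B s then Real.exp (lam * D s ω) else 0 := by
      intro ω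
      have hc : (x ≤ DS s (fun i : ↥S => X i ω) ∧
          ∀ r, r < s → DS r (fun i : ↥S => X i ω) < x) ↔ ω ∈ B s := by
        rw [hDSeq s le_rfl]
        constructor
        · rintro ⟨h1, h2⟩
          exact ⟨h1, fun r hr => by rw [← hDSeq r hr.le]; exact h2 r hr⟩
        · rintro ⟨h1, h2⟩
          exact ⟨h1, fun r hr => by rw [hDSeq r hr.le]; exact h2 r hr⟩
      simp only [hF_def, hΦ_def]
      exact if_congr hc (by rw [hDSeq s le_rfl]) rfl
    have hGeq : ∀ ω, G ω = Real.exp (lam * ZT ω) := by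
      intro ω
      simp only [hG_def, hΨ_def, hZT_def]
      congr 1
      congr 1
      apply Finset.sum_congr rfl
      intro k hk
      rw [dif_pos hk]
    have hXS : Measurable (fun ω (i : ↥S) => X (i : ℕ) ω) :=
      measurable_pi_lambda _ fun i => hmeas i
    have hXT : Measurable (fun ω (i : ↥T) => X (i : ℕ) ω) :=
      measurable_pi_lambda _ fun i => hmeas i
    have hFmeas : Measurable F := by
      have := hΦmeas.comp hXS
      simpa only [hF_def, Function.comp_def] using this
    have hGmeas : Measurable G := by
      have := hΨmeas.comp hXT
      simpa only [hG_def, Function.comp_def] using this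
    have hFbound : ∀ ω, |F ω| ≤ Real.exp (|lam| * (s * (|p| + 1))) := by
      intro ω
      rw [hFeq ω]
      by_cases h : ω ∈ B s
      · rw [if_pos h]
        exact hexp_bound lam s ω
      · rw [if_neg h, abs_zero]
        positivity
    have hFint : Integrable F μ := integrable_of_abs_le hFmeas _ hFbound
    have hZTbound : ∀ ω, |ZT ω| ≤ m * (|p| + 1) := by
      intro ω
      calc |ZT ω| ≤ ∑ k ∈ T, |p - X k ω| := Finset.abs_sum_le_sum_abs _ _
        _ ≤ ∑ _k ∈ T, (|p| + 1) := by
            refine Finset.sum_le_sum fun k _ => ?_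
            have h1 := (hrange k ω).1
            have h2 := (hrange k ω).2
            rw [abs_le]
            constructor
            · have := neg_abs_le p; linarith
            · have := le_abs_self p; linarith
        _ = (T.card : ℝ) * (|p| + 1) := by rw [Finset.sum_const, nsmul_eq_mul]
        _ ≤ m * (|p| + 1) := by
            apply mul_le_mul_of_nonneg_right _ (by positivity)
            have : T.card ≤ m := by
              rw [hT_def, Nat.card_Icc]
              omega
            exact_mod_cast this
    have hGbound : ∀ ω, |G ω| ≤ Real.exp (|lam| * (m * (|p| + 1))) := by
      intro ω
      rw [hGeq ω, abs_of_pos (Real.exp_pos _)]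
      apply Real.exp_le_exp.2
      calc lam * ZT ω ≤ |lam * ZT ω| := le_abs_self _
        _ = |lam| * |ZT ω| := abs_mul _ _
        _ ≤ |lam| * (m * (|p| + 1)) :=
            mul_le_mul_of_nonneg_left (hZTbound ω) (abs_nonneg lam)
    have hGint : Integrable G μ := integrable_of_abs_le hGmeas _ hGbound
    -- the set integral equals ∫ F * G
    have hDm_split : ∀ ω, D m ω = D s ω + ZT ω := by
      intro ω
      simp only [hD_def, hZT_def]
      rw [show Finset.Icc 1 m = S ∪ T from hsplit, Finset.sum_union hST]
    have hset_eq : ∫ ω in B s, Real.exp (lam * D m ω) ∂μ = ∫ ω, F ω * G ω ∂μ := by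
      rw [← integral_indicator (hBmeas s)]
      apply integral_congr_ae
      apply ae_of_all
      intro ω
      simp only [hFeq, hGeq]
      by_cases h : ω ∈ B s
      · rw [Set.indicator_of_mem h, if_pos h, hDm_split ω, mul_add, Real.exp_add]
      · rw [Set.indicator_of_notMem h, if_neg h, zero_mul]
    have hmul : ∫ ω, F ω * G ω ∂μ = (∫ ω, F ω ∂μ) * ∫ ω, G ω ∂μ :=
      hFG.integral_fun_mul_eq_mul_integral hFint.aestronglyMeasurable hGint.aestronglyMeasurable
    -- lower bound ∫ F
    have hFlow : Real.exp (lam * x) * (μ (B s)).toReal ≤ ∫ ω, F ω ∂μ := by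
      have : ∫ ω, F ω ∂μ = ∫ ω in B s, Real.exp (lam * D s ω) ∂μ := by
        rw [← integral_indicator (hBmeas s)]
        apply integral_congr_ae
        apply ae_of_all
        intro ω
        rw [hFeq ω]
        by_cases h : ω ∈ B s
        · rw [Set.indicator_of_mem h, if_pos h]
        · rw [Set.indicator_of_notMem h, if_neg h]
      rw [this]
      have h1 : ∫ _ω in B s, Real.exp (lam * x) ∂μ = Real.exp (lam * x) * (μ (B s)).toReal := by
        rw [setIntegral_const, smul_eq_mul, mul_comm]; rfl
      rw [← h1]
      apply setIntegral_mono_on (integrable_const _).integrableOn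
        ((hexp_int lam s).integrableOn) (hBmeas s)
      intro ω hω
      exact Real.exp_le_exp.2 (mul_le_mul_of_nonneg_left hω.1 hlam)
    -- lower bound ∫ G
    have hGlow : (1 : ℝ) ≤ ∫ ω, G ω ∂μ := by
      have hZTmeas : Measurable ZT := Finset.measurable_sum _ fun k _ =>
        measurable_const.sub (hmeas k)
      have hZTint : Integrable ZT μ := integrable_of_abs_le hZTmeas _ hZTbound
      have hmeanZT : ∫ ω, lam * ZT ω ∂μ = 0 := by
        rw [integral_const_mul]
        have : ∫ ω, ZT ω ∂μ = ∑ k ∈ T, ∫ ω, (p - X k ω) ∂μ := by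
          rw [hZT_def]
          apply integral_finset_sum
          intro k _
          apply Integrable.sub (integrable_const p)
          exact integrable_of_abs_le (hmeas k) 1 fun ω => abs_le.2
            ⟨by linarith [(hrange k ω).1], (hrange k ω).2⟩
        rw [this]
        have : ∀ k ∈ T, ∫ ω, (p - X k ω) ∂μ = 0 := by
          intro k _
          rw [integral_sub (integrable_const p) (integrable_of_abs_le (hmeas k) 1
            fun ω => abs_le.2 ⟨by linarith [(hrange k ω).1], (hrange k ω).2⟩),
            integral_const, hmean k]
          simp
        rw [Finset.sum_congr rfl this]
        simp
      have hlow := exp_integral_le (μ := μ) (hZTmeas.const_mul lam)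
        (|lam| * (m * (|p| + 1))) (fun ω => by
          calc |lam * ZT ω| = |lam| * |ZT ω| := abs_mul _ _
            _ ≤ |lam| * (m * (|p| + 1)) :=
                mul_le_mul_of_nonneg_left (hZTbound ω) (abs_nonneg lam))
      rw [hmeanZT, Real.exp_zero] at hlow
      calc (1 : ℝ) ≤ ∫ ω, Real.exp (lam * ZT ω) ∂μ := hlow
        _ = ∫ ω, G ω ∂μ := by
            apply integral_congr_ae
            apply ae_of_all
            intro ω
            rw [hGeq ω]
    -- combine
    have hFnonneg : 0 ≤ ∫ ω, F ω ∂μ := le_trans (by positivity) hFlow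
    calc Real.exp (lam * x) * (μ (B s)).toReal
        = Real.exp (lam * x) * (μ (B s)).toReal * 1 := (mul_one _).symm
      _ ≤ (∫ ω, F ω ∂μ) * ∫ ω, G ω ∂μ := by
          apply mul_le_mul hFlow hGlow one_pos.le hFnonneg
      _ = ∫ ω, F ω * G ω ∂μ := hmul.symm
      _ = ∫ ω in B s, Real.exp (lam * D m ω) ∂μ := hset_eq.symm
  -- sum the blocks
  have hsum : ∑ s ∈ Finset.Icc 1 m, ∫ ω in B s, Real.exp (lam * D m ω) ∂μ
      ≤ ∫ ω, Real.exp (lam * D m ω) ∂μ := by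
    rw [← integral_biUnion_finset (Finset.Icc 1 m) (fun s _ => hBmeas s) hdisjB
      (fun s _ => (hexp_int lam m).integrableOn)]
    apply setIntegral_le_integral (hexp_int lam m)
    exact ae_of_all _ fun ω => (Real.exp_pos _).le
  -- mgf bound
  have hmgf : ∫ ω, Real.exp (lam * D m ω) ∂μ ≤ Real.exp (m * lam ^ 2 / 8) := by
    set Y : ℕ → Ω → ℝ := fun k ω => p - X k ω with hY_def
    have hYmeas : ∀ k, Measurable (Y k) := fun k => measurable_const.sub (hmeas k)
    have hYindep : iIndepFun Y μ :=
      hindep.comp (fun _ a => p - a) (fun _ => measurable_const.sub measurable_id)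
    have hDY : ∀ ω, D m ω = (∑ k ∈ Finset.Icc 1 m, Y k) ω := by
      intro ω
      rw [Finset.sum_apply]
    have h1 : ∫ ω, Real.exp (lam * D m ω) ∂μ
        = mgf (∑ k ∈ Finset.Icc 1 m, Y k) μ lam := by
      rw [mgf]
      apply integral_congr_ae
      apply ae_of_all
      intro ω
      simp only [hDY]
    rw [h1, hYindep.mgf_sum hYmeas (Finset.Icc 1 m)]
    have heach : ∀ k ∈ Finset.Icc 1 m, mgf (Y k) μ lam ≤ Real.exp (lam ^ 2 / 8) := by
      intro k _
      have : mgf (Y k) μ lam = Real.exp (lam * p) * ∫ ω, Real.exp (-lam * X k ω) ∂μ := by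
        rw [mgf, ← integral_const_mul]
        apply integral_congr_ae
        apply ae_of_all
        intro ω
        show Real.exp (lam * Y k ω) = Real.exp (lam * p) * Real.exp (-lam * X k ω)
        rw [← Real.exp_add]
        simp only [hY_def]
        congr 1
        ring
      rw [this]
      have h2 := mgf_upper (μ := μ) (hmeas k) (hrange k) (hmean k) (-lam)
      calc Real.exp (lam * p) * ∫ ω, Real.exp (-lam * X k ω) ∂μ
          ≤ Real.exp (lam * p) * Real.exp (p * (-lam) + (-lam) ^ 2 / 8) := by
            apply mul_le_mul_of_nonneg_left h2 (Real.exp_pos _).le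
        _ = Real.exp (lam ^ 2 / 8) := by
            rw [← Real.exp_add]
            congr 1
            ring
    have hnonneg : ∀ k ∈ Finset.Icc 1 m, 0 ≤ mgf (Y k) μ lam := fun k _ =>
      mgf_nonneg
    calc ∏ k ∈ Finset.Icc 1 m, mgf (Y k) μ lam
        ≤ ∏ _k ∈ Finset.Icc 1 m, Real.exp (lam ^ 2 / 8) :=
          Finset.prod_le_prod hnonneg heach
      _ = Real.exp (lam ^ 2 / 8) ^ (Finset.Icc 1 m).card := Finset.prod_const _
      _ = Real.exp (m * lam ^ 2 / 8) := by
          rw [Nat.card_Icc, Nat.add_sub_cancel, ← Real.exp_nat_mul]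
          congr 1
          ring
  -- put everything together
  have hμsub : (μ {ω | ∃ s : ℕ, 1 ≤ s ∧ s ≤ m ∧
      x ≤ p * s - ∑ k ∈ Finset.Icc 1 s, X k ω}).toReal
      ≤ ∑ s ∈ Finset.Icc 1 m, (μ (B s)).toReal := by
    have h1 : μ {ω | ∃ s : ℕ, 1 ≤ s ∧ s ≤ m ∧ x ≤ p * s - ∑ k ∈ Finset.Icc 1 s, X k ω}
        ≤ ∑ s ∈ Finset.Icc 1 m, μ (B s) :=
      le_trans (measure_mono hsub) (measure_biUnion_finset_le _ _)
    have h2 : (∑ s ∈ Finset.Icc 1 m, μ (B s)) ≠ ⊤ :=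
      ENNReal.sum_ne_top.2 fun s _ => measure_ne_top μ _
    calc (μ _).toReal ≤ (∑ s ∈ Finset.Icc 1 m, μ (B s)).toReal := ENNReal.toReal_mono h2 h1
      _ = ∑ s ∈ Finset.Icc 1 m, (μ (B s)).toReal :=
          ENNReal.toReal_sum fun s _ => measure_ne_top μ _
  have hkey : Real.exp (lam * x) * (μ {ω | ∃ s : ℕ, 1 ≤ s ∧ s ≤ m ∧
      x ≤ p * s - ∑ k ∈ Finset.Icc 1 s, X k ω}).toReal ≤ Real.exp (m * lam ^ 2 / 8) := by
    calc Real.exp (lam * x) * (μ _).toReal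
        ≤ Real.exp (lam * x) * ∑ s ∈ Finset.Icc 1 m, (μ (B s)).toReal :=
          mul_le_mul_of_nonneg_left hμsub (Real.exp_pos _).le
      _ = ∑ s ∈ Finset.Icc 1 m, Real.exp (lam * x) * (μ (B s)).toReal :=
          Finset.mul_sum _ _ _
      _ ≤ ∑ s ∈ Finset.Icc 1 m, ∫ ω in B s, Real.exp (lam * D m ω) ∂μ :=
          Finset.sum_le_sum hblock
      _ ≤ ∫ ω, Real.exp (lam * D m ω) ∂μ := hsum
      _ ≤ Real.exp (m * lam ^ 2 / 8) := hmgf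
  have hepos : (0:ℝ) < Real.exp (lam * x) := Real.exp_pos _
  rw [mul_comm] at hkey
  have h2 := (le_div_iff₀ hepos).2 hkey
  calc (μ _).toReal ≤ Real.exp (m * lam ^ 2 / 8) / Real.exp (lam * x) := h2
    _ = Real.exp (m * lam ^ 2 / 8 - lam * x) := (Real.exp_sub _ _).symm


end Helpers

/-- Combination of the deterministic implication in the proof of Lemma 2 with
the anytime UCB deviation inequality of Lemma 6: for i.i.d. `[0,1]`-valued
random variables with mean `p > 1/2` and gap `Δ = p − 1/2`, the probability
that the lower confidence bound is at most `1/2` at some sample size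
`s ∈ [4α log t/Δ², t]` is at most `(log t / log(α+1/2) + 1) · t^{−2α/(α+1/2)}`. -/
theorem stmt_11 {Ω : Type*} [MeasurableSpace Ω] (μ : Measure Ω) [IsProbabilityMeasure μ]
    (X : ℕ → Ω → ℝ) (p : ℝ) (hp : 1/2 < p) (Δ : ℝ) (hΔ : Δ = p - 1/2)
    (hmeas : ∀ k, Measurable (X k))
    (hindep : iIndepFun X μ)
    (hident : ∀ k, IdentDistrib (X k) (X 1) μ μ)
    (hrange : ∀ k ω, X k ω ∈ Set.Icc (0 : ℝ) 1)
    (hmean : ∀ k, ∫ ω, X k ω ∂μ = p)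
    (α : ℝ) (hα : 1/2 < α) (t : ℕ) (ht : 2 ≤ t) :
    μ {ω | ∃ s : ℕ, 4 * α * Real.log t / Δ ^ 2 ≤ (s : ℝ) ∧ s ≤ t ∧
        (∑ k ∈ Finset.Icc 1 s, X k ω) / (s : ℝ)
          - Real.sqrt (α * Real.log t / (s : ℝ)) ≤ 1/2}
      ≤ ENNReal.ofReal
          ((Real.log t / Real.log (α + 1/2) + 1) * (t : ℝ) ^ (-(2 * α) / (α + 1/2))) := by
  have hΔpos : 0 < Δ := by rw [hΔ]; linarith
  have ht1 : (1:ℝ) < t := by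
    have : (2:ℝ) ≤ t := by exact_mod_cast ht
    linarith
  have htpos : (0:ℝ) < t := by linarith
  set L := Real.log t with hL_def
  have hL : 0 < L := Real.log_pos ht1
  set β := α + 1/2 with hβ_def
  have hβ : 1 < β := by rw [hβ_def]; linarith
  have hβpos : (0:ℝ) < β := by linarith
  have hlogβ : 0 < Real.log β := Real.log_pos hβ
  have hα0 : (0:ℝ) < α := by linarith
  set K := Nat.floor (L / Real.log β) with hK_def
  set mk : ℕ → ℕ := fun k => min t (Nat.floor (β ^ (k+1))) with hmk_def
  set xk : ℕ → ℝ := fun k => Real.sqrt (α * L * β ^ k) with hxk_def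
  have hxkpos : ∀ k, 0 < xk k := fun k => Real.sqrt_pos.2 (by positivity)
  -- coverage of the event by the blocks
  have hcover : {ω | ∃ s : ℕ, 4 * α * L / Δ ^ 2 ≤ (s : ℝ) ∧ s ≤ t ∧
        (∑ k ∈ Finset.Icc 1 s, X k ω) / (s : ℝ)
          - Real.sqrt (α * L / (s : ℝ)) ≤ 1/2}
      ⊆ ⋃ k ∈ Finset.range (K+1),
        {ω | ∃ s : ℕ, 1 ≤ s ∧ s ≤ mk k ∧ xk k ≤ p * s - ∑ j ∈ Finset.Icc 1 s, X j ω} := by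
    rintro ω ⟨s, hs_low, hs_t, hs_dev⟩
    have hsR : (0:ℝ) < s := by
      have h0 : (0:ℝ) < 4 * α * L / Δ ^ 2 := by positivity
      linarith
    have hspos : 0 < s := by exact_mod_cast hsR
    have hs1R : (1:ℝ) ≤ s := by exact_mod_cast hspos
    set k := Nat.floor (Real.log s / Real.log β) with hk_def
    have hlogs_nonneg : 0 ≤ Real.log s := Real.log_nonneg hs1R
    have hk_nonneg : 0 ≤ Real.log s / Real.log β := div_nonneg hlogs_nonneg hlogβ.le
    have hlogs_le : Real.log s ≤ L := by
      rw [hL_def]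
      apply Real.log_le_log hsR
      exact_mod_cast hs_t
    have hkK : k ≤ K := by
      apply Nat.floor_mono
      gcongr
    have hβk_le : β ^ k ≤ (s:ℝ) := by
      have hk_le : (k:ℝ) * Real.log β ≤ Real.log s := by
        rw [← le_div_iff₀ hlogβ]
        exact Nat.floor_le hk_nonneg
      have h1 : Real.log (β ^ k) ≤ Real.log s := by
        rw [Real.log_pow]; exact_mod_cast hk_le
      calc β ^ k = Real.exp (Real.log (β ^ k)) := (Real.exp_log (pow_pos hβpos k)).symm
        _ ≤ Real.exp (Real.log s) := Real.exp_le_exp.2 h1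
        _ = s := Real.exp_log hsR
    have hs_lt : (s:ℝ) < β ^ (k+1) := by
      have h1 : Real.log s / Real.log β < (k:ℝ) + 1 := Nat.lt_floor_add_one _
      have h2 : Real.log s < ((k:ℝ) + 1) * Real.log β := by
        rw [div_lt_iff₀ hlogβ] at h1
        linarith
      calc (s:ℝ) = Real.exp (Real.log s) := (Real.exp_log hsR).symm
        _ < Real.exp (((k:ℝ)+1) * Real.log β) := Real.exp_lt_exp.2 h2
        _ = β ^ (k+1) := by
            rw [show ((k:ℝ)+1) = ((k+1 : ℕ):ℝ) by push_cast; ring, ← Real.log_pow]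
            exact Real.exp_log (pow_pos hβpos _)
    have hsmk : s ≤ mk k := by
      apply le_min hs_t
      exact Nat.le_floor hs_lt.le
    -- deterministic step
    have hr_le : Real.sqrt (α * L / s) ≤ Δ / 2 := by
      rw [show Δ / 2 = Real.sqrt ((Δ/2)^2) from (Real.sqrt_sq (by linarith)).symm]
      apply Real.sqrt_le_sqrt
      have h5 : 4 * α * L ≤ s * Δ ^ 2 := by
        rw [div_le_iff₀ (by positivity)] at hs_low
        linarith
      rw [show (Δ/2)^2 = Δ^2/4 by ring, div_le_div_iff₀ hsR (by norm_num : (0:ℝ) < 4)]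
      linarith
    have hsum_le : (∑ j ∈ Finset.Icc 1 s, X j ω) / s ≤ p - Real.sqrt (α * L / s) := by
      have h6 : Real.sqrt (α * L / s) ≤ Δ / 2 := hr_le
      have h7 : (1:ℝ)/2 = p - Δ := by rw [hΔ]; ring
      linarith [hs_dev]
    have hdev : Real.sqrt (α * L * s) ≤ p * s - ∑ j ∈ Finset.Icc 1 s, X j ω := by
      have h7 : (s:ℝ) * Real.sqrt (α * L / s) = Real.sqrt (α * L * s) := by
        rw [show α * L * (s:ℝ) = (s:ℝ)^2 * (α * L / s) by field_simp,
          Real.sqrt_mul (sq_nonneg _), Real.sqrt_sq hsR.le]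
      have h8 : (s:ℝ) * ((∑ j ∈ Finset.Icc 1 s, X j ω) / s) = ∑ j ∈ Finset.Icc 1 s, X j ω := by
        field_simp
      have h9 := mul_le_mul_of_nonneg_left hsum_le hsR.le
      rw [h8, mul_sub, h7] at h9
      linarith
    have hxk_le : xk k ≤ Real.sqrt (α * L * s) := by
      apply Real.sqrt_le_sqrt
      have : α * L * β ^ k ≤ α * L * s := by
        apply mul_le_mul_of_nonneg_left hβk_le (by positivity)
      exact this
    exact Set.mem_iUnion₂.2 ⟨k, Finset.mem_range.2 (Nat.lt_succ_of_le hkK),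
      ⟨s, hspos, hsmk, le_trans hxk_le hdev⟩⟩
  -- per-block bound
  have hblock : ∀ k : ℕ,
      μ {ω | ∃ s : ℕ, 1 ≤ s ∧ s ≤ mk k ∧ xk k ≤ p * s - ∑ j ∈ Finset.Icc 1 s, X j ω}
      ≤ ENNReal.ofReal (Real.exp (-(2 * α / β) * L)) := by
    intro k
    have hβk1 : (1:ℝ) ≤ β ^ (k+1) := one_le_pow₀ hβ.le
    have hmk1 : 1 ≤ mk k := le_min (le_trans one_le_two ht) (Nat.le_floor (by
      push_cast; linarith))
    have hmkpos : (0:ℝ) < mk k := by exact_mod_cast hmk1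
    set lam := 4 * xk k / mk k with hlam_def
    have hxknn : 0 ≤ xk k := (hxkpos k).le
    have hlam : 0 ≤ lam := by positivity
    have hcher := maximal_chernoff μ X p hmeas hindep hrange hmean (mk k) (xk k) lam
      (hxkpos k) hlam
    have hexp_eq : (mk k : ℝ) * lam ^ 2 / 8 - lam * xk k = -(2 * (xk k)^2 / mk k) := by
      rw [hlam_def]
      field_simp
      ring
    have hxk2 : (xk k)^2 = α * L * β ^ k := Real.sq_sqrt (by positivity)
    have hmk_le : (mk k : ℝ) ≤ β ^ (k+1) := by
      calc (mk k : ℝ) ≤ (Nat.floor (β ^ (k+1)) : ℝ) := by exact_mod_cast min_le_right _ _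
        _ ≤ β ^ (k+1) := Nat.floor_le (by positivity)
    have hfinal : -(2 * (xk k)^2 / mk k) ≤ -(2 * α / β) * L := by
      rw [hxk2]
      have h1 : 2 * (α * L * β ^ k) / β ^ (k+1) ≤ 2 * (α * L * β ^ k) / mk k :=
        div_le_div_of_nonneg_left (by positivity) hmkpos hmk_le
      have h2 : 2 * (α * L * β ^ k) / β ^ (k+1) = 2 * α / β * L := by
        rw [pow_succ]
        field_simp
      linarith
    have h3 : μ {ω | ∃ s : ℕ, 1 ≤ s ∧ s ≤ mk k ∧ xk k ≤ p * s - ∑ j ∈ Finset.Icc 1 s, X j ω}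
        = ENNReal.ofReal ((μ {ω | ∃ s : ℕ, 1 ≤ s ∧ s ≤ mk k ∧
            xk k ≤ p * s - ∑ j ∈ Finset.Icc 1 s, X j ω}).toReal) :=
      (ENNReal.ofReal_toReal (measure_ne_top μ _)).symm
    rw [h3]
    apply ENNReal.ofReal_le_ofReal
    calc (μ _).toReal ≤ Real.exp ((mk k : ℝ) * lam ^ 2 / 8 - lam * xk k) := hcher
      _ ≤ Real.exp (-(2 * α / β) * L) := by
          apply Real.exp_le_exp.2
          rw [hexp_eq]
          exact hfinal
  -- put it together
  calc μ {ω | ∃ s : ℕ, 4 * α * L / Δ ^ 2 ≤ (s : ℝ) ∧ s ≤ t ∧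
        (∑ k ∈ Finset.Icc 1 s, X k ω) / (s : ℝ)
          - Real.sqrt (α * L / (s : ℝ)) ≤ 1/2}
      ≤ μ (⋃ k ∈ Finset.range (K+1),
        {ω | ∃ s : ℕ, 1 ≤ s ∧ s ≤ mk k ∧ xk k ≤ p * s - ∑ j ∈ Finset.Icc 1 s, X j ω}) :=
        measure_mono hcover
    _ ≤ ∑ k ∈ Finset.range (K+1),
        μ {ω | ∃ s : ℕ, 1 ≤ s ∧ s ≤ mk k ∧ xk k ≤ p * s - ∑ j ∈ Finset.Icc 1 s, X j ω} :=
        measure_biUnion_finset_le _ _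
    _ ≤ ∑ _k ∈ Finset.range (K+1), ENNReal.ofReal (Real.exp (-(2 * α / β) * L)) :=
        Finset.sum_le_sum fun k _ => hblock k
    _ = ENNReal.ofReal (((K+1 : ℕ):ℝ) * Real.exp (-(2 * α / β) * L)) := by
        rw [Finset.sum_const, Finset.card_range, nsmul_eq_mul,
          ← ENNReal.ofReal_natCast (K+1), ← ENNReal.ofReal_mul (by positivity)]
    _ ≤ ENNReal.ofReal ((L / Real.log β + 1) * (t : ℝ) ^ (-(2 * α) / β)) := by
        apply ENNReal.ofReal_le_ofReal
        have hrpow : (t:ℝ) ^ (-(2 * α) / β) = Real.exp (-(2 * α / β) * L) := by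
          rw [Real.rpow_def_of_pos htpos, hL_def]
          congr 1
          ring
        rw [hrpow]
        apply mul_le_mul_of_nonneg_right _ (Real.exp_pos _).le
        have hfl := Nat.floor_le (show 0 ≤ L / Real.log β by positivity)
        rw [← hK_def] at hfl
        push_cast
        linarith
end
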